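/- (Lemma 2 / lemma:ellkminusone.) Let f_1, …, f_t be polynomials of degree < K with Reed–Solomon codewords c^(1), …, c^(t), let Y be their indicator matrix, and let ḡ be a polynomial of degree < K whose Reed–Solomon codeword c̄ = c_ḡ satisfies c̄ ∉ {c^(1), …, c^(t)}. Then |supp(W_{c̄}) ∩ supp(Y)| ≤ t(K−1); equivalently, ⟨W_{c̄}, Y⟩ ≤ t(K−1), where supp denotes the set of positions (α, j) holding a nonzero entry. -/

import Mathlib

/-- Lemma 2: If `c̄` is the Reed–Solomon codeword of a polynomial of
degree `< K` and `c̄ ∉ {c⁽¹⁾, …, c⁽ᵗ⁾}`, then the support of the Kautz–Singleton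
codeword `W_c̄` meets the support of the indicator matrix `Y` in at most `t(K−1)`
positions; equivalently `⟨W_c̄, Y⟩ ≤ t(K−1)`. -/
theorem stmt7 (F : Type) [Field F] [Fintype F] [DecidableEq F]
    (K N t : ℕ) (hK : 1 ≤ K)
    (x : Fin N → F) (hx : Function.Injective x)
    (f : Fin t → Polynomial F) (hf : ∀ i, (f i).degree < K)
    (c : Fin t → Fin N → F) (hc : ∀ i j, c i j = Polynomial.eval (x j) (f i))
    (W : (Fin N → F) → F → Fin N → ℕ)
    (hW : ∀ (cw : Fin N → F) (α : F) (j : Fin N), W cw α j = if cw j = α then 1 else 0)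
    (Y : F → Fin N → ℕ)
    (hY : ∀ (α : F) (j : Fin N), Y α j = if ∃ i, c i j = α then 1 else 0)
    (g : Polynomial F) (hg : g.degree < K)
    (cg : Fin N → F) (hcg : ∀ j, cg j = Polynomial.eval (x j) g)
    (hnot : ∀ i, cg ≠ c i) :
    ((Finset.univ.filter
        (fun aj : F × Fin N => W cg aj.1 aj.2 ≠ 0 ∧ Y aj.1 aj.2 ≠ 0)).card
      ≤ t * (K - 1)) ∧
    (∑ α : F, ∑ j : Fin N, W cg α j * Y α j) ≤ t * (K - 1) := by
  -- For each i, the number of agreement positions is at most K - 1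
  have key : ∀ i : Fin t,
      (Finset.univ.filter (fun j : Fin N => c i j = cg j)).card ≤ K - 1 := by
    intro i
    have hne : g - f i ≠ 0 := by
      intro h
      apply hnot i
      have hge : g = f i := sub_eq_zero.mp h
      funext j
      rw [hcg, hc, hge]
    have hdeg : (g - f i).natDegree ≤ K - 1 := by
      have hlt : (g - f i).degree < (K : ℕ) :=
        lt_of_le_of_lt (Polynomial.degree_sub_le _ _) (max_lt hg (hf i))
      have := (Polynomial.natDegree_lt_iff_degree_lt hne).mpr hlt
      omega
    have hmap : (Finset.univ.filter (fun j : Fin N => c i j = cg j)).card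
        ≤ (g - f i).roots.toFinset.card := by
      apply Finset.card_le_card_of_injOn (fun j => x j)
      · intro j hj
        simp only [Finset.mem_coe, Finset.mem_filter, Finset.mem_univ, true_and] at hj
        rw [Finset.mem_coe, Multiset.mem_toFinset, Polynomial.mem_roots hne]
        simp [Polynomial.IsRoot, ← hcg j, ← hc i j, hj]
      · intro a _ b _ h
        exact hx h
    calc (Finset.univ.filter (fun j : Fin N => c i j = cg j)).card
        ≤ (g - f i).roots.toFinset.card := hmap
      _ ≤ Multiset.card (g - f i).roots := Multiset.toFinset_card_le _
      _ ≤ (g - f i).natDegree := Polynomial.card_roots' _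
      _ ≤ K - 1 := hdeg
  have hJ : (Finset.univ.filter (fun j : Fin N => ∃ i, c i j = cg j)).card
      ≤ t * (K - 1) := by
    have hsub : (Finset.univ.filter (fun j : Fin N => ∃ i, c i j = cg j))
        ⊆ Finset.univ.biUnion
          (fun i : Fin t => Finset.univ.filter (fun j : Fin N => c i j = cg j)) := by
      intro j hj
      simp only [Finset.mem_filter, Finset.mem_univ, true_and] at hj
      obtain ⟨i, hi⟩ := hj
      simp only [Finset.mem_biUnion, Finset.mem_filter, Finset.mem_univ, true_and]
      exact ⟨i, hi⟩
    calc (Finset.univ.filter (fun j : Fin N => ∃ i, c i j = cg j)).card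
        ≤ (Finset.univ.biUnion
            (fun i : Fin t => Finset.univ.filter (fun j : Fin N => c i j = cg j))).card :=
          Finset.card_le_card hsub
      _ ≤ ∑ i : Fin t, (Finset.univ.filter (fun j : Fin N => c i j = cg j)).card :=
          Finset.card_biUnion_le
      _ ≤ ∑ _i : Fin t, (K - 1) := Finset.sum_le_sum (fun i _ => key i)
      _ = t * (K - 1) := by simp [Finset.sum_const, Finset.card_univ, mul_comm]
  have hcard : (Finset.univ.filter
      (fun aj : F × Fin N => W cg aj.1 aj.2 ≠ 0 ∧ Y aj.1 aj.2 ≠ 0)).card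
      ≤ t * (K - 1) := by
    refine le_trans ?_ hJ
    apply Finset.card_le_card_of_injOn (fun aj => aj.2)
    · intro aj haj
      simp only [Finset.mem_coe, Finset.mem_filter, Finset.mem_univ, true_and, hW, hY] at haj
      obtain ⟨h1, h2⟩ := haj
      have hcg1 : cg aj.2 = aj.1 := by
        by_contra h; simp [h] at h1
      have hex : ∃ i, c i aj.2 = aj.1 := by
        by_contra h; simp [h] at h2
      simp only [Finset.mem_coe, Finset.mem_filter, Finset.mem_univ, true_and]
      obtain ⟨i, hi⟩ := hex
      exact ⟨i, by rw [hi, hcg1]⟩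
    · intro a ha b hb h
      simp only [Finset.mem_filter, Finset.mem_univ, true_and, hW] at ha hb
      have ha1 : cg a.2 = a.1 := by
        by_contra hcon; simp [hcon] at ha
      have hb1 : cg b.2 = b.1 := by
        by_contra hcon; simp [hcon] at hb
      have h2 : a.2 = b.2 := h
      have : a.1 = b.1 := by rw [← ha1, ← hb1, h2]
      exact Prod.ext this h2
  refine ⟨hcard, ?_⟩
  have hsum : (∑ α : F, ∑ j : Fin N, W cg α j * Y α j)
      = (Finset.univ.filter
        (fun aj : F × Fin N => W cg aj.1 aj.2 ≠ 0 ∧ Y aj.1 aj.2 ≠ 0)).card := by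
    rw [show (∑ α : F, ∑ j : Fin N, W cg α j * Y α j)
        = ∑ aj : F × Fin N, W cg aj.1 aj.2 * Y aj.1 aj.2 from
        (Fintype.sum_prod_type (f := fun aj : F × Fin N => W cg aj.1 aj.2 * Y aj.1 aj.2)).symm,
      Finset.card_eq_sum_ones, Finset.sum_filter]
    apply Finset.sum_congr rfl
    intro aj _
    rw [hW, hY]
    by_cases h1 : cg aj.2 = aj.1 <;> by_cases h2 : ∃ i, c i aj.2 = aj.1 <;>
      simp [h1, h2, hW, hY]
  rw [hsum]
  exact hcard
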